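/- Let x = lim_{n→∞} στσ²τ⋯σⁿτ(aaa⋯) ∈ A^ℕ. Then there is a constant C such that p_x(n) ≤ C n for all n ≥ 1; in fact p_x(n) ≤ 27 n, although x is not linearly recurrent. -/

import Mathlib

namespace DurandLR

variable {A B : Type*}

/-- `u` occurs at position `i` in the one-sided sequence `x`. -/
def OccursAt (x : ℕ → A) (u : List A) (i : ℕ) : Prop :=
  ∀ k : Fin u.length, x (i + (k : ℕ)) = u.get k

/-- `u` occurs (somewhere) in the one-sided sequence `x`. -/
def Occurs (x : ℕ → A) (u : List A) : Prop := ∃ i, OccursAt x u i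

/-- `u` occurs at position `i` in the two-sided sequence `x`. -/
def OccursAtZ (x : ℤ → A) (u : List A) (i : ℤ) : Prop :=
  ∀ k : Fin u.length, x (i + (k : ℕ)) = u.get k

def OccursZ (x : ℤ → A) (u : List A) : Prop := ∃ i, OccursAtZ x u i

/-- The word `u` has exactly `m` occurrences in the finite word `w`. -/
def OccCountEq (u w : List A) (m : ℕ) : Prop :=
  {i : ℕ | u <+: w.drop i}.ncard = m

/-- `w` is a return word to `u` in the one-sided sequence `x`: `wu` occurs in `x`,
`u` is a prefix of `wu` and `u` has exactly two occurrences in `wu`. -/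
def IsReturnWord (x : ℕ → A) (u w : List A) : Prop :=
  Occurs x (w ++ u) ∧ u <+: (w ++ u) ∧ OccCountEq u (w ++ u) 2

/-- `w` is a return word to `u` in the two-sided sequence `x`. -/
def IsReturnWordZ (x : ℤ → A) (u w : List A) : Prop :=
  OccursZ x (w ++ u) ∧ u <+: (w ++ u) ∧ OccCountEq u (w ++ u) 2

/-- `x` is uniformly recurrent: every word occurring in `x` occurs with bounded gaps. -/
def UniformlyRecurrent (x : ℕ → A) : Prop :=
  ∀ u, Occurs x u → ∃ M : ℕ, ∀ i : ℕ, ∃ j, i ≤ j ∧ j < i + M ∧ OccursAt x u j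

def UniformlyRecurrentZ (x : ℤ → A) : Prop :=
  ∀ u, OccursZ x u → ∃ M : ℕ, ∀ i : ℤ, ∃ j : ℤ, i ≤ j ∧ j < i + M ∧ OccursAtZ x u j

/-- `x` is linearly recurrent with constant `K`. -/
def LinearlyRecurrentWith (x : ℕ → A) (K : ℕ) : Prop :=
  UniformlyRecurrent x ∧ ∀ u w, IsReturnWord x u w → w.length ≤ K * u.length

def LinearlyRecurrent (x : ℕ → A) : Prop := ∃ K, LinearlyRecurrentWith x K

def LinearlyRecurrentZ (x : ℤ → A) : Prop :=
  UniformlyRecurrentZ x ∧ ∃ K : ℕ, ∀ u w, IsReturnWordZ x u w → w.length ≤ K * u.length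

/-- The subshift generated by a two-sided sequence `x` : all `z` whose finite subwords
occur in `x`. -/
def SubshiftGenZ (x : ℤ → A) : Set (ℤ → A) := {z | ∀ u, OccursZ z u → OccursZ x u}

/-- The subshift generated by a one-sided sequence `x`. -/
def SubshiftGen (x : ℕ → A) : Set (ℤ → A) := {z | ∀ u, OccursZ z u → Occurs x u}

/-- A minimal subshift: nonempty and every element generates it. -/
def IsMinimalSubshift (X : Set (ℤ → A)) : Prop :=
  X.Nonempty ∧ ∀ z ∈ X, X = SubshiftGenZ z

/-- A linearly recurrent subshift: minimal and containing an LR sequence. -/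
def IsLRSubshift (X : Set (ℤ → A)) : Prop :=
  IsMinimalSubshift X ∧ ∃ x ∈ X, LinearlyRecurrentZ x

def IsPeriodic (z : ℤ → A) : Prop := ∃ p : ℕ, 0 < p ∧ ∀ n : ℤ, z (n + p) = z n

/-- Image of a finite word under a morphism (substitution). -/
def wordMap (σ : A → List B) : List A → List B
  | [] => []
  | a :: u => σ a ++ wordMap σ u

/-- Composition of two morphisms: `compM σ τ = σ ∘ τ`. -/
def compM (σ τ : A → List A) : A → List A := fun b => wordMap σ (τ b)

/-- Iterate of a morphism: `powM σ n = σ^n`. -/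
def powM (σ : A → List A) : ℕ → A → List A
  | 0 => fun b => [b]
  | n + 1 => compM σ (powM σ n)

/-- `chain σ r n = σ_r ∘ σ_{r+1} ∘ ⋯ ∘ σ_{r+n-1}` (the empty composition for `n = 0`). -/
def chain (σ : ℕ → A → List A) (r : ℕ) : ℕ → A → List A
  | 0 => fun b => [b]
  | n + 1 => fun b => wordMap (chain σ r n) (σ (r + n) b)

/-- The periodic infinite sequence `www⋯` obtained by repeating the word `w`
(with a default letter for the degenerate empty case). -/
def repSeq (w : List A) (d : A) : ℕ → A := fun i => w.getD (i % w.length) d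

/-- The prefix of length `n` of the sequence `x`, as a word. -/
def seqTake (x : ℕ → A) (n : ℕ) : List A := (List.range n).map x

/-- `y` is the image of the infinite sequence `z` under the morphism `σ`:
the image of every prefix of `z` is a prefix of `y`. -/
def IsSeqImage (σ : A → List B) (z : ℕ → A) (y : ℕ → B) : Prop :=
  ∀ n, seqTake y (wordMap σ (seqTake z n)).length = wordMap σ (seqTake z n)

/-- `σ_0 σ_1 ⋯ σ_n (aaa⋯)` converges to `x` in the product topology, where the `n`-th
approximation is the periodic sequence obtained by repeating the word `W n`. -/
def ConvergesTo (W : ℕ → List A) (d : A) (x : ℕ → A) : Prop :=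
  ∀ m, ∃ N, ∀ n ≥ N, repSeq (W n) d m = x m

/-- A proper morphism: all images begin with the same letter and end with the same letter. -/
def ProperMorphism (σ : A → List A) : Prop :=
  ∃ l r : A, ∀ b, (σ b).head? = some l ∧ (σ b).getLast? = some r

/-- Primitivity with constant `s₀` of a directive sequence of morphisms
`σ_n : A_{n+1} → A_n^*`: every `b ∈ A_r` occurs in `σ_{r+1} ⋯ σ_{r+s₀} (c)`
for every `c ∈ A_{r+s₀+1}`. -/
def PrimitiveWith (σ : ℕ → A → List A) (Aseq : ℕ → Set A) (s0 : ℕ) : Prop :=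
  ∀ r : ℕ, ∀ b ∈ Aseq r, ∀ c ∈ Aseq (r + s0 + 1), b ∈ chain σ (r + 1) s0 c

/-- The data of an S-adic system: `a` belongs to every alphabet and
`σ_n` maps `A_{n+1}` into words over `A_n`. -/
def SAdicSystem (σ : ℕ → A → List A) (Aseq : ℕ → Set A) (a : A) : Prop :=
  (∀ n, a ∈ Aseq n) ∧ (∀ n, ∀ b ∈ Aseq (n + 1), ∀ c ∈ σ n b, c ∈ Aseq n)

/-- `x` is the S-adic sequence generated by the directive sequence `σ` and letter `a`:
`σ_0 σ_1 ⋯ σ_n (aaa⋯)` converges to `x`. -/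
def GeneratesSAdic (σ : ℕ → A → List A) (Aseq : ℕ → Set A) (a : A) (x : ℕ → A) : Prop :=
  SAdicSystem σ Aseq a ∧ ConvergesTo (fun n => chain σ 0 (n + 1) a) a x

/-- The complexity function `p_x(n)`: the number of distinct words of length `n`
occurring in `x`. -/
noncomputable def complexity (x : ℕ → A) (n : ℕ) : ℕ := {u : List A | u.length = n ∧ Occurs x u}.ncard

/-- Any two successive occurrences of `u` in `x` differ by at most `M`. -/
def GapsBoundedBy (x : ℕ → A) (u : List A) (M : ℕ) : Prop :=
  ∀ i j, OccursAt x u i → OccursAt x u j → i < j →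
    (∀ k, i < k → k < j → ¬ OccursAt x u k) → j - i ≤ M

/-- The finite word `x_{[p,q)}` of a two-sided sequence. -/
def zSeg (x : ℤ → A) (p q : ℤ) : List A := (List.range (q - p).toNat).map fun t => x (p + t)

/-- `w` is a return word to `u.v` in the two-sided sequence `x`: there are two
consecutive occurrences `j < k` of `uv` in `x` with `w = x_{[j+|u|, k+|u|)}`. -/
def IsReturnWordUV (x : ℤ → A) (u v w : List A) : Prop :=
  ∃ j k : ℤ, OccursAtZ x (u ++ v) j ∧ OccursAtZ x (u ++ v) k ∧ j < k ∧
    (∀ i : ℤ, j < i → i < k → ¬ OccursAtZ x (u ++ v) i) ∧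
    w = zSeg x (j + u.length) (k + u.length)

/-- The substitution `σ` on `{a,b,c} = {0,1,2}`: `σ(a)=acb`, `σ(b)=bab`, `σ(c)=cbc`. -/
def sigma3 : Fin 3 → List (Fin 3) := ![[0, 2, 1], [1, 0, 1], [2, 1, 2]]

/-- The substitution `τ` on `{a,b,c} = {0,1,2}`: `τ(a)=abc`, `τ(b)=acb`, `τ(c)=aac`. -/
def tau3 : Fin 3 → List (Fin 3) := ![[0, 1, 2], [0, 2, 1], [0, 0, 2]]

/-- `rho n = σ τ σ² τ ⋯ σⁿ τ` (identity for `n = 0`). -/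
def rho : ℕ → Fin 3 → List (Fin 3)
  | 0 => fun b => [b]
  | n + 1 => compM (rho n) (compM (powM sigma3 (n + 1)) tau3)

/-- `psi n l = σ^{n+2} τ σ^{n+3} τ ⋯ σ^{n+l+1} τ` (identity for `l = 0`). -/
def psi (n : ℕ) : ℕ → Fin 3 → List (Fin 3)
  | 0 => fun b => [b]
  | l + 1 => compM (psi n l) (compM (powM sigma3 (n + 2 + l)) tau3)

/-- The Sturmian substitution `τ` on `{0,1}`: `τ(0)=0`, `τ(1)=10`. -/
def tau2 : Fin 2 → List (Fin 2) := ![[0], [1, 0]]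

/-- The Sturmian substitution `σ` on `{0,1}`: `σ(0)=01`, `σ(1)=1`. -/
def sigma2 : Fin 2 → List (Fin 2) := ![[0, 1], [1]]

/-- `xi i k = τ^{i₁} σ^{i₂} τ^{i₃} ⋯ τ^{i_{2k-1}} σ^{i_{2k}}` (identity for `k = 0`). -/
def xi (i : ℕ → ℕ) : ℕ → Fin 2 → List (Fin 2)
  | 0 => fun b => [b]
  | k + 1 => compM (xi i k) (compM (powM tau2 (i (2 * k + 1))) (powM sigma2 (i (2 * k + 2))))

/-- `a : ℕ → ℕ` gives (from index 1 on) the continued fraction expansion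
`α = [0; a₁, a₂, a₃, …]`, expressed through the Gauss map. -/
def IsCFExpansion (α : ℝ) (a : ℕ → ℕ) : Prop :=
  ∃ β : ℕ → ℝ, β 0 = α ∧ ∀ n : ℕ,
    0 < β n ∧ β n < 1 ∧ (a (n + 1) : ℤ) = ⌊1 / β n⌋ ∧ β (n + 1) = 1 / β n - ⌊1 / β n⌋

/-! ### Auxiliary development -/

section WordMap

lemma wordMap_nil (f : A → List B) : wordMap f ([] : List A) = [] := rfl

lemma wordMap_cons (f : A → List B) (a : A) (u : List A) :
    wordMap f (a :: u) = f a ++ wordMap f u := rfl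

lemma wordMap_append (f : A → List B) (u v : List A) :
    wordMap f (u ++ v) = wordMap f u ++ wordMap f v := by
  induction u with
  | nil => rfl
  | cons a u ih => simp [wordMap_cons, ih, List.append_assoc]

lemma wordMap_id (w : List A) : wordMap (fun b => [b]) w = w := by
  induction w with
  | nil => rfl
  | cons a u ih => simp [wordMap_cons, ih]

lemma wordMap_wordMap {C : Type*} (g : A → List B) (f : B → List C) (w : List A) :
    wordMap f (wordMap g w) = wordMap (fun b => wordMap f (g b)) w := by
  induction w with
  | nil => rfl
  | cons a u ih => simp [wordMap_cons, wordMap_append, ih]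

lemma wordMap_congr {f g : A → List B} (h : ∀ b, f b = g b) (w : List A) :
    wordMap f w = wordMap g w := by
  induction w with
  | nil => rfl
  | cons a u ih => simp [wordMap_cons, ih, h]

lemma wordMap_length {f : A → List B} {L : ℕ} (hf : ∀ b, (f b).length = L) (w : List A) :
    (wordMap f w).length = L * w.length := by
  induction w with
  | nil => simp [wordMap_nil]
  | cons a u ih => simp [wordMap_cons, ih, hf]; ring

lemma wordMap_getD {f : A → List B} {L : ℕ} (hf : ∀ b, (f b).length = L) (d : B) (a0 : A) :
    ∀ (w : List A) (i : ℕ), i < w.length → ∀ e : ℕ, e < L →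
      (wordMap f w).getD (L * i + e) d = (f (w.getD i a0)).getD e d := by
  intro w
  induction w with
  | nil => intro i hi _ _; simp at hi
  | cons a u ih =>
    intro i hi e he
    match i with
    | 0 =>
      simp only [Nat.mul_zero, Nat.zero_add, wordMap_cons]
      rw [List.getD_append _ _ _ _ (by rw [hf a]; exact he)]
      rfl
    | i + 1 =>
      simp only [wordMap_cons]
      have hL : (f a).length ≤ L * (i+1) + e := by rw [hf a]; nlinarith [Nat.zero_le (L*i+e)]
      rw [List.getD_append_right _ _ _ _ hL]
      have harith : L * (i + 1) + e - (f a).length = L * i + e := by rw [hf a]; ring_nf; omega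
      rw [harith]
      exact ih i (by simpa using hi) e he

end WordMap

section Chain

lemma chain_zero (σ : ℕ → A → List A) (r : ℕ) (b : A) : chain σ r 0 b = [b] := rfl

lemma chain_succ (σ : ℕ → A → List A) (r n : ℕ) (b : A) :
    chain σ r (n+1) b = wordMap (chain σ r n) (σ (r+n) b) := rfl

lemma chain_one (σ : ℕ → A → List A) (r : ℕ) (b : A) : chain σ r 1 b = σ r b := by
  rw [chain_succ, Nat.add_zero]
  exact wordMap_id (σ r b)

lemma chain_split (σ : ℕ → A → List A) (r m p : ℕ) (b : A) :
    chain σ r (m+p) b = wordMap (chain σ r m) (chain σ (r+m) p b) := by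
  induction p generalizing b with
  | zero => simp [chain_zero, wordMap_cons, wordMap_nil]
  | succ p ih =>
    rw [show m + (p+1) = (m+p) + 1 from rfl, chain_succ, chain_succ,
      show r + m + p = r + (m + p) by omega]
    rw [wordMap_congr (fun c => ih c), ← wordMap_wordMap]

lemma chain_cons (σ : ℕ → A → List A) (r k : ℕ) (b : A) :
    chain σ r (k+1) b = wordMap (σ r) (chain σ (r+1) k b) := by
  have h := chain_split σ r 1 k b
  rw [Nat.add_comm 1 k] at h
  rw [h]
  exact wordMap_congr (fun c => chain_one σ r c) _

lemma powM_succ' (f : A → List A) (k : ℕ) (b : A) :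
    powM f (k+1) b = wordMap (powM f k) (f b) := by
  induction k with
  | zero =>
    show wordMap f [b] = wordMap (fun c => [c]) (f b)
    simp [wordMap_cons, wordMap_nil, wordMap_id]
  | succ k ih =>
    show wordMap f (powM f (k+1) b) = _
    rw [ih, wordMap_wordMap]
    exact wordMap_congr (fun c => rfl) _

lemma chain_const {σ : ℕ → A → List A} {f : A → List A} {r k : ℕ}
    (h : ∀ l, l < k → σ (r + l) = f) (b : A) : chain σ r k b = powM f k b := by
  induction k generalizing b with
  | zero => rfl
  | succ k ih =>
    have h' : ∀ l, l < k → σ (r + l) = f := fun l hl => h l (Nat.lt_succ_of_lt hl)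
    rw [chain_succ, powM_succ', h k (Nat.lt_succ_self k)]
    exact wordMap_congr (fun c => ih h' c) _

end Chain

section Elem

/-- `Tn n` : number of elementary morphisms in `rho n`. -/
def Tn : ℕ → ℕ
  | 0 => 0
  | n + 1 => Tn n + (n + 2)

def isTau (j : ℕ) : Bool := (List.range (j+2)).any (fun m => j + 1 == Tn (m+1))

/-- The elementary directive sequence `σ τ σ σ τ σ σ σ τ ⋯`. -/
def elem (j : ℕ) : Fin 3 → List (Fin 3) := if isTau j then tau3 else sigma3

lemma elem_cases (j : ℕ) : elem j = sigma3 ∨ elem j = tau3 := by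
  unfold elem; split <;> simp

lemma elem_len : ∀ j b, (elem j b).length = 3 := by
  intro j b
  rcases elem_cases j with h | h <;> rw [h] <;> fin_cases b <;> rfl

lemma Tn_strict : StrictMono Tn := by
  apply strictMono_nat_of_lt_succ
  intro n
  show Tn n < Tn n + (n+2)
  omega

lemma le_Tn (n : ℕ) : n ≤ Tn n := by
  induction n with
  | zero => exact Nat.le_refl 0
  | succ n ih => show n + 1 ≤ Tn n + (n+2); omega

lemma isTau_iff (j : ℕ) : isTau j = true ↔ ∃ m, j + 1 = Tn (m+1) := by
  unfold isTau
  rw [List.any_eq_true]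
  constructor
  · rintro ⟨m, _, hm⟩
    exact ⟨m, by simpa using hm⟩
  · rintro ⟨m, hm⟩
    refine ⟨m, List.mem_range.2 ?_, by simpa using hm⟩
    have := le_Tn (m+1)
    omega

lemma elem_sig {n l : ℕ} (hl : l ≤ n) : elem (Tn n + l) = sigma3 := by
  unfold elem
  rw [if_neg]
  intro h
  obtain ⟨m, hm⟩ := (isTau_iff _).1 h
  have h1 : Tn n < Tn (m+1) := by omega
  have h2 : n < m + 1 := Tn_strict.lt_iff_lt.1 h1
  have h3 : Tn (n+1) ≤ Tn (m+1) := Tn_strict.le_iff_le.2 h2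
  have h4 : Tn (n+1) = Tn n + (n+2) := rfl
  omega

lemma elem_tau (n : ℕ) : elem (Tn n + n + 1) = tau3 := by
  unfold elem
  rw [if_pos]
  rw [isTau_iff]
  exact ⟨n, by show _ = Tn n + (n+2); omega⟩

lemma chain_elem_length (r k : ℕ) (b : Fin 3) : (chain elem r k b).length = 3^k := by
  induction k generalizing b with
  | zero => rfl
  | succ k ih =>
    rw [chain_succ, wordMap_length (fun c => ih c), elem_len, pow_succ]

lemma rho_eq (n : ℕ) : ∀ b, rho n b = chain elem 0 (Tn n) b := by
  induction n with
  | zero => intro b; rfl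
  | succ n ih =>
    intro b
    show wordMap (rho n) (wordMap (powM sigma3 (n+1)) (tau3 b)) = _
    have h1 : Tn (n+1) = Tn n + (n+2) := rfl
    rw [h1, chain_split]
    simp only [Nat.zero_add]
    rw [wordMap_congr ih]
    congr 1
    -- chain elem (Tn n) (n+2) b = wordMap (powM sigma3 (n+1)) (tau3 b)
    rw [show n + 2 = (n+1) + 1 from rfl, chain_succ]
    rw [show Tn n + (n+1) = Tn n + n + 1 by omega, elem_tau]
    exact (wordMap_congr (fun c =>
      chain_const (fun l hl => elem_sig (by omega)) c) _).symm

end Elem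

section Tails

lemma elem_head (j : ℕ) : ∃ l, elem j 0 = 0 :: l := by
  rcases elem_cases j with h | h <;> rw [h]
  · exact ⟨[2,1], rfl⟩
  · exact ⟨[1,2], rfl⟩

lemma chain_head (r k : ℕ) : ∃ l, chain elem r k 0 = 0 :: l := by
  induction k with
  | zero => exact ⟨[], rfl⟩
  | succ k ih =>
    obtain ⟨l, hl⟩ := elem_head (r+k)
    obtain ⟨l', hl'⟩ := ih
    rw [chain_succ, hl, wordMap_cons, hl']
    exact ⟨l' ++ wordMap (chain elem r k) l, rfl⟩

lemma chain_prefix (r : ℕ) {M M' : ℕ} (h : M ≤ M') :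
    chain elem r M 0 <+: chain elem r M' 0 := by
  obtain ⟨p, rfl⟩ := Nat.exists_eq_add_of_le h
  rw [chain_split]
  obtain ⟨l, hl⟩ := chain_head (r+M) p
  rw [hl, wordMap_cons]
  exact ⟨wordMap (chain elem r M) l, rfl⟩

lemma getD_of_prefix {u v : List (Fin 3)} (h : u <+: v) {m : ℕ} (hm : m < u.length) :
    v.getD m 0 = u.getD m 0 := by
  obtain ⟨t, rfl⟩ := h
  exact List.getD_append _ _ _ _ hm

/-- The level-`j` tail sequence of the S-adic system. -/
def tSeq (j : ℕ) : ℕ → Fin 3 := fun i => (chain elem j (i+1) 0).getD i 0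

lemma lt_pow3 (i : ℕ) : i < 3 ^ (i+1) := by
  calc i < 3 ^ i := Nat.lt_pow_self (n := i) (by norm_num)
  _ ≤ 3 ^ (i+1) := Nat.pow_le_pow_right (by norm_num) (Nat.le_succ i)

lemma tSeq_eq (j M i : ℕ) (h : i < 3^M) : tSeq j i = (chain elem j M 0).getD i 0 := by
  rcases Nat.le_total (i+1) M with hM | hM
  · exact (getD_of_prefix (chain_prefix j hM)
      (by rw [chain_elem_length]; exact lt_pow3 i)).symm
  · exact getD_of_prefix (chain_prefix j hM) (by rw [chain_elem_length]; exact h)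

lemma tSeq_img (j i e : ℕ) (he : e < 3) :
    tSeq j (3*i+e) = (elem j (tSeq (j+1) i)).getD e 0 := by
  set M := i + 1 with hM
  have hiM : i < 3^M := lt_pow3 i
  have h2 : 3*i+e < 3^(M+1) := by
    have : 3 * i + e < 3 * (i+1) := by omega
    calc 3*i+e < 3*(i+1) := this
    _ ≤ 3 * 3^M := by
        have := lt_pow3 i
        omega
    _ = 3^(M+1) := by rw [pow_succ]; ring
  rw [tSeq_eq j (M+1) _ h2, chain_cons]
  have hw : (chain elem (j+1) M 0).length = 3^M := chain_elem_length _ _ _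
  have := wordMap_getD (f := elem j) (L := 3) (elem_len j) (0 : Fin 3) (0 : Fin 3)
      (chain elem (j+1) M 0) i (by rw [hw]; exact hiM) e he
  rw [this, tSeq_eq (j+1) M i hiM]

/-- Block decomposition of any sequence `y` that matches the chain prefixes. -/
lemma block_decomp {x : ℕ → Fin 3}
    (hx0 : ∀ m, x m = tSeq 0 m) (k : ℕ) :
    ∀ i s, s < 3^k → x (3^k * i + s) = (chain elem 0 k (tSeq k i)).getD s 0 := by
  induction k with
  | zero =>
    intro i s hs
    interval_cases s
    simpa [chain_zero] using hx0 i
  | succ k ih =>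
    intro i s hs
    have h3 : (0:ℕ) < 3^k := Nat.pow_pos (by norm_num)
    set e := s / 3^k with he
    set s' := s % 3^k with hs'
    have hdm := Nat.div_add_mod s (3^k)
    have hes : s = 3^k * e + s' := by rw [he, hs']; omega
    have he3 : e < 3 := by
      rw [he]
      apply Nat.div_lt_of_lt_mul
      rw [pow_succ] at hs; omega
    have hs'3 : s' < 3^k := Nat.mod_lt _ h3
    have harith : 3^(k+1) * i + s = 3^k * (3*i+e) + s' := by
      rw [pow_succ, hes]; ring
    rw [harith, ih (3*i+e) s' hs'3, tSeq_img k i e he3]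
    -- RHS: chain elem 0 (k+1) b with b = tSeq (k+1) i
    rw [show chain elem 0 (k+1) (tSeq (k+1) i)
        = wordMap (chain elem 0 k) (elem k (tSeq (k+1) i)) by
      rw [chain_succ, Nat.zero_add]]
    rw [hes]
    have := wordMap_getD (f := chain elem 0 k) (L := 3^k)
        (fun c => chain_elem_length 0 k c) (0 : Fin 3) (0 : Fin 3)
        (elem k (tSeq (k+1) i)) e (by rw [elem_len]; exact he3) s' hs'3
    rw [this]

end Tails

section Complexity

lemma occursAt_iff (y : ℕ → Fin 3) (u : List (Fin 3)) (i : ℕ) :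
    OccursAt y u i ↔ ∀ t, t < u.length → y (i+t) = u.getD t 0 := by
  constructor
  · intro h t ht
    have := h ⟨t, ht⟩
    rw [List.getD_eq_getElem u 0 ht]
    exact this
  · intro h k
    have := h k.1 k.2
    rw [List.getD_eq_getElem u 0 k.2] at this
    exact this

lemma x_eq_chain {x : ℕ → Fin 3} (hx : ConvergesTo (fun n => rho n 0) 0 x)
    (m M : ℕ) (h : m < 3^M) : x m = (chain elem 0 M 0).getD m 0 := by
  obtain ⟨N, hN⟩ := hx m
  set n := max N M with hn
  have h1 := hN n (le_max_left _ _)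
  have hMn : M ≤ Tn n := le_trans (le_max_right N M) (le_Tn n)
  have hlen : (rho n 0).length = 3 ^ (Tn n) := by
    rw [rho_eq]; exact chain_elem_length _ _ _
  have hm3 : m < 3 ^ (Tn n) :=
    lt_of_lt_of_le h (Nat.pow_le_pow_right (by norm_num) hMn)
  have h2 : repSeq (rho n 0) 0 m = (rho n 0).getD m 0 := by
    unfold repSeq
    rw [hlen, Nat.mod_eq_of_lt hm3]
  rw [← h1, h2, rho_eq]
  exact getD_of_prefix (chain_prefix 0 hMn) (by rw [chain_elem_length]; exact h)

lemma x_eq_tSeq {x : ℕ → Fin 3} (hx : ConvergesTo (fun n => rho n 0) 0 x)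
    (m : ℕ) : x m = tSeq 0 m := by
  rw [tSeq_eq 0 (m+1) m (lt_pow3 m)]
  exact x_eq_chain hx m (m+1) (lt_pow3 m)

lemma complexity_le {x : ℕ → Fin 3} (hx0 : ∀ m, x m = tSeq 0 m)
    {n : ℕ} (hn : 1 ≤ n) : complexity x n ≤ 27 * n := by
  have hex : ∃ k, n ≤ 3^k := ⟨n, (Nat.lt_pow_self (n := n) (by norm_num)).le⟩
  set k := Nat.find hex with hkdef
  have hk : n ≤ 3^k := Nat.find_spec hex
  have h3 : (0:ℕ) < 3^k := Nat.pow_pos (by norm_num)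
  have h3k : 3^k ≤ 3*n := by
    rcases Nat.eq_zero_or_pos k with h0 | hpos
    · rw [h0]; omega
    · have hmin := Nat.find_min hex (show k - 1 < k by omega)
      have hpow : 3^k = 3 * 3^(k-1) := by
        rw [← pow_succ']
        congr 1
        omega
      omega
  set Φ : Fin 3 × Fin 3 × Fin (3^k) → List (Fin 3) :=
    fun t => ((chain elem 0 k t.1 ++ chain elem 0 k t.2.1).drop (t.2.2 : ℕ)).take n with hPhi
  have hsub : {u : List (Fin 3) | u.length = n ∧ Occurs x u} ⊆ Φ '' Set.univ := by
    rintro u ⟨hlen, q, hocc⟩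
    set i := q / 3^k with hi
    set r := q % 3^k with hr
    have hrlt : r < 3^k := by rw [hr]; exact Nat.mod_lt _ h3
    have hq : q = 3^k * i + r := by
      rw [hi, hr]; exact (Nat.div_add_mod q (3^k)).symm
    refine ⟨(tSeq k i, tSeq k (i+1), ⟨r, hrlt⟩), Set.mem_univ _, ?_⟩
    have hlenA : (chain elem 0 k (tSeq k i)).length = 3^k := chain_elem_length _ _ _
    have hlenB : (chain elem 0 k (tSeq k (i+1))).length = 3^k := chain_elem_length _ _ _
    have hlenAB : (chain elem 0 k (tSeq k i) ++ chain elem 0 k (tSeq k (i+1))).length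
        = 2 * 3^k := by
      rw [List.length_append, hlenA, hlenB]; ring
    symm
    apply List.ext_get
    · rw [hlen, hPhi]
      simp only [List.length_take, List.length_drop, hlenAB]
      omega
    · intro t h2 h1
      have ht : t < n := by
        simp only [hPhi, List.length_take] at h1
        omega
      have hx1 : x (q + t) = u.get ⟨t, by omega⟩ := hocc ⟨t, by omega⟩
      simp only [hPhi, List.get_eq_getElem]
      rw [List.getElem_take, List.getElem_drop]
      have hrt2 : r + t < (chain elem 0 k (tSeq k i) ++ chain elem 0 k (tSeq k (i+1))).length := by
        rw [hlenAB]; omega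
      rw [show (chain elem 0 k (tSeq k i) ++ chain elem 0 k (tSeq k (i+1)))[r+t]'hrt2
          = (chain elem 0 k (tSeq k i) ++ chain elem 0 k (tSeq k (i+1))).getD (r+t) 0 from
        (List.getD_eq_getElem _ 0 hrt2).symm]
      rcases Nat.lt_or_ge (r+t) (3^k) with hc | hc
      · rw [List.getD_append _ _ _ _ (by rw [hlenA]; omega)]
        rw [← block_decomp hx0 k i (r+t) hc]
        rw [show 3^k * i + (r+t) = q + t by omega]
        rw [hx1]; rfl
      · rw [List.getD_append_right _ _ _ _ (by rw [hlenA]; omega)]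
        rw [hlenA]
        rw [← block_decomp hx0 k (i+1) (r+t-3^k) (by omega)]
        rw [show 3^k * (i+1) + (r+t-3^k) = q + t by rw [Nat.mul_add, Nat.mul_one]; omega]
        rw [hx1]; rfl
  calc complexity x n ≤ (Φ '' Set.univ).ncard :=
        Set.ncard_le_ncard hsub (Set.finite_univ.image Φ)
    _ ≤ (Set.univ : Set (Fin 3 × Fin 3 × Fin (3^k))).ncard := Set.ncard_image_le Set.finite_univ
    _ = 9 * 3^k := by
        rw [Set.ncard_univ, Nat.card_eq_fintype_card]
        simp [Fintype.card_prod]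
        ring
    _ ≤ 27 * n := by omega

end Complexity

section CA

variable {v w : ℕ → Fin 3}

/-- In a `σ`-image, `ca` occurs only at block junctions `3i+2`, coming from `ca` below. -/
lemma ca_sig (H : ∀ i e, e < 3 → w (3*i+e) = (sigma3 (v i)).getD e 0)
    (p : ℕ) (h2 : w p = 2) (h0 : w (p+1) = 0) :
    ∃ i, p = 3*i+2 ∧ v i = 2 ∧ v (i+1) = 0 := by
  obtain ⟨i, r, hp, hr⟩ : ∃ i r, p = 3*i + r ∧ r < 3 := ⟨p/3, p%3, by omega, by omega⟩
  rw [hp] at h2 h0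
  interval_cases r
  · rw [H i 0 (by omega)] at h2
    rw [show 3*i+0+1 = 3*i+1 by omega, H i 1 (by omega)] at h0
    have : ∀ d : Fin 3, ¬((sigma3 d).getD 0 0 = 2 ∧ (sigma3 d).getD 1 0 = 0) := by decide
    exact absurd ⟨h2, h0⟩ (this _)
  · rw [H i 1 (by omega)] at h2
    rw [show 3*i+1+1 = 3*i+2 by omega, H i 2 (by omega)] at h0
    have : ∀ d : Fin 3, ¬((sigma3 d).getD 1 0 = 2 ∧ (sigma3 d).getD 2 0 = 0) := by decide
    exact absurd ⟨h2, h0⟩ (this _)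
  · rw [H i 2 (by omega)] at h2
    rw [show 3*i+2+1 = 3*(i+1)+0 by omega, H (i+1) 0 (by omega)] at h0
    refine ⟨i, hp, ?_, ?_⟩
    · have : ∀ d : Fin 3, (sigma3 d).getD 2 0 = 2 → d = 2 := by decide
      exact this _ h2
    · have : ∀ d : Fin 3, (sigma3 d).getD 0 0 = 0 → d = 0 := by decide
      exact this _ h0

/-- In a `τ`-image, `ca` occurs only at block junctions `3i+2`, coming from a non-`b` letter. -/
lemma ca_tau (H : ∀ i e, e < 3 → w (3*i+e) = (tau3 (v i)).getD e 0)
    (p : ℕ) (h2 : w p = 2) (h0 : w (p+1) = 0) :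
    ∃ i, p = 3*i+2 ∧ v i ≠ 1 := by
  obtain ⟨i, r, hp, hr⟩ : ∃ i r, p = 3*i + r ∧ r < 3 := ⟨p/3, p%3, by omega, by omega⟩
  rw [hp] at h2 h0
  interval_cases r
  · rw [H i 0 (by omega)] at h2
    have : ∀ d : Fin 3, (tau3 d).getD 0 0 ≠ 2 := by decide
    exact absurd h2 (this _)
  · rw [H i 1 (by omega)] at h2
    rw [show 3*i+1+1 = 3*i+2 by omega, H i 2 (by omega)] at h0
    have : ∀ d : Fin 3, ¬((tau3 d).getD 1 0 = 2 ∧ (tau3 d).getD 2 0 = 0) := by decide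
    exact absurd ⟨h2, h0⟩ (this _)
  · rw [H i 2 (by omega)] at h2
    refine ⟨i, hp, ?_⟩
    have : ∀ d : Fin 3, (tau3 d).getD 2 0 = 2 → d ≠ 1 := by decide
    exact this _ h2

lemma ca_prod_sig (H : ∀ i e, e < 3 → w (3*i+e) = (sigma3 (v i)).getD e 0)
    (i : ℕ) (h2 : v i = 2) (h0 : v (i+1) = 0) : w (3*i+2) = 2 ∧ w (3*i+3) = 0 := by
  constructor
  · rw [H i 2 (by omega), h2]; rfl
  · rw [show 3*i+3 = 3*(i+1)+0 by omega, H (i+1) 0 (by omega), h0]; rfl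

lemma ca_prod_tau (H : ∀ i e, e < 3 → w (3*i+e) = (tau3 (v i)).getD e 0)
    (i : ℕ) (h : v i ≠ 1) : w (3*i+2) = 2 ∧ w (3*i+3) = 0 := by
  constructor
  · rw [H i 2 (by omega)]
    have : ∀ d : Fin 3, d ≠ 1 → (tau3 d).getD 2 0 = 2 := by decide
    exact this _ h
  · rw [show 3*i+3 = 3*(i+1)+0 by omega, H (i+1) 0 (by omega)]
    have : ∀ d : Fin 3, (tau3 d).getD 0 0 = 0 := by decide
    exact this _

/-- Any image sequence contains a non-`b` letter beyond any point. -/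
lemma nonb {θ : Fin 3 → List (Fin 3)} (hθ : θ = sigma3 ∨ θ = tau3)
    (H : ∀ i e, e < 3 → w (3*i+e) = (θ (v i)).getD e 0) (p : ℕ) :
    ∃ q, p ≤ q ∧ w q ≠ 1 := by
  have key : (θ (v p)).getD 1 0 ≠ 1 ∨ (θ (v p)).getD 2 0 ≠ 1 := by
    rcases hθ with h | h <;> rw [h]
    · exact (by decide : ∀ d : Fin 3, (sigma3 d).getD 1 0 ≠ 1 ∨ (sigma3 d).getD 2 0 ≠ 1) _
    · exact (by decide : ∀ d : Fin 3, (tau3 d).getD 1 0 ≠ 1 ∨ (tau3 d).getD 2 0 ≠ 1) _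
  rcases key with h | h
  · exact ⟨3*p+1, by omega, by rw [H p 1 (by omega)]; exact h⟩
  · exact ⟨3*p+2, by omega, by rw [H p 2 (by omega)]; exact h⟩

end CA

section Decode

/-- The word contains the pattern `ca`. -/
def HasCA (W : List (Fin 3)) : Prop :=
  ∃ r, r + 1 < W.length ∧ W.getD r 0 = 2 ∧ W.getD (r+1) 0 = 0

lemma theta_len {θ : Fin 3 → List (Fin 3)} (hθ : θ = sigma3 ∨ θ = tau3) :
    ∀ b, (θ b).length = 3 := by
  rcases hθ with h | h <;> rw [h] <;> decide

lemma hasCA_push {θ : Fin 3 → List (Fin 3)} (hθ : θ = sigma3 ∨ θ = tau3)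
    {W : List (Fin 3)} (h : HasCA W) : HasCA (wordMap θ W) := by
  obtain ⟨r, hr, h2, h0⟩ := h
  have hlen3 := theta_len hθ
  have hlen : (wordMap θ W).length = 3 * W.length := by
    rw [wordMap_length hlen3]
  refine ⟨3*r+2, by omega, ?_, ?_⟩
  · rw [show 3*r+2 = 3*r+2 from rfl,
      wordMap_getD hlen3 0 0 W r (by omega) 2 (by omega), h2]
    rcases hθ with h | h <;> rw [h] <;> rfl
  · rw [show 3*r+2+1 = 3*(r+1)+0 by omega,
      wordMap_getD hlen3 0 0 W (r+1) (by omega) 0 (by omega), h0]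
    rcases hθ with h | h <;> rw [h] <;> rfl

lemma dec_step {j : ℕ} {W : List (Fin 3)} (hca : HasCA W) {q : ℕ}
    (hocc : OccursAt (tSeq j) (wordMap (elem j) W) q) :
    3 ∣ q ∧ OccursAt (tSeq (j+1)) W (q/3) := by
  have hθ := elem_cases j
  have hlen3 := theta_len hθ
  have hlen : (wordMap (elem j) W).length = 3 * W.length := by
    rw [wordMap_length hlen3]
  have hocc' := (occursAt_iff _ _ _).1 hocc
  rw [hlen] at hocc'
  obtain ⟨r, hr, h2, h0⟩ := hca
  have ha1 : tSeq j (q + (3*r+2)) = 2 := by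
    rw [hocc' (3*r+2) (by omega),
      wordMap_getD hlen3 0 0 W r (by omega) 2 (by omega), h2]
    rcases hθ with h | h <;> rw [h] <;> rfl
  have ha2 : tSeq j (q + (3*r+2) + 1) = 0 := by
    rw [show q + (3*r+2) + 1 = q + (3*(r+1)+0) by omega,
      hocc' (3*(r+1)+0) (by omega),
      wordMap_getD hlen3 0 0 W (r+1) (by omega) 0 (by omega), h0]
    rcases hθ with h | h <;> rw [h] <;> rfl
  have hdvd : 3 ∣ q := by
    rcases hθ with h | h
    · have H' : ∀ i e, e < 3 → tSeq j (3*i+e) = (sigma3 (tSeq (j+1) i)).getD e 0 := by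
        intro i e he; rw [← h]; exact tSeq_img j i e he
      obtain ⟨i0, heq, -, -⟩ := ca_sig H' _ ha1 ha2
      omega
    · have H' : ∀ i e, e < 3 → tSeq j (3*i+e) = (tau3 (tSeq (j+1) i)).getD e 0 := by
        intro i e he; rw [← h]; exact tSeq_img j i e he
      obtain ⟨i0, heq, -⟩ := ca_tau H' _ ha1 ha2
      omega
  refine ⟨hdvd, ?_⟩
  rw [occursAt_iff]
  intro m hm
  have hblock : ∀ e, e < 3 →
      (elem j (tSeq (j+1) (q/3 + m))).getD e 0 = (elem j (W.getD m 0)).getD e 0 := by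
    intro e he
    rw [← tSeq_img j (q/3+m) e he,
      show 3*(q/3+m)+e = q + (3*m+e) by omega,
      hocc' (3*m+e) (by omega),
      wordMap_getD hlen3 0 0 W m hm e he]
  have hinj : ∀ d d' : Fin 3, (elem j d).getD 0 0 = (elem j d').getD 0 0 →
      (elem j d).getD 1 0 = (elem j d').getD 1 0 → d = d' := by
    rcases hθ with h | h <;> rw [h] <;> decide
  exact hinj _ _ (hblock 0 (by omega)) (hblock 1 (by omega))

lemma wordMap_chain_succ (j k : ℕ) (W : List (Fin 3)) :
    wordMap (chain elem j (k+1)) W = wordMap (elem j) (wordMap (chain elem (j+1) k) W) := by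
  rw [wordMap_wordMap]
  exact wordMap_congr (fun b => chain_cons elem j k b) W

lemma wordMap_chain_zero (j : ℕ) (W : List (Fin 3)) :
    wordMap (chain elem j 0) W = W := by
  rw [wordMap_congr (fun b => chain_zero elem j b) W]
  exact wordMap_id W

lemma hasCA_chain (k : ℕ) : ∀ (j : ℕ) {W : List (Fin 3)}, HasCA W →
    HasCA (wordMap (chain elem j k) W) := by
  induction k with
  | zero => intro j W h; rwa [wordMap_chain_zero]
  | succ k ih =>
    intro j W h
    rw [wordMap_chain_succ]
    exact hasCA_push (elem_cases j) (ih (j+1) h)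

lemma occ_decode (k : ℕ) : ∀ (j : ℕ) (W : List (Fin 3)) (q : ℕ), HasCA W →
    OccursAt (tSeq j) (wordMap (chain elem j k) W) q →
    ∃ i, q = 3^k * i ∧ OccursAt (tSeq (j+k)) W i := by
  induction k with
  | zero =>
    intro j W q _ hocc
    rw [wordMap_chain_zero] at hocc
    exact ⟨q, by simp, hocc⟩
  | succ k ih =>
    intro j W q hca hocc
    rw [wordMap_chain_succ] at hocc
    obtain ⟨hdvd, hocc'⟩ := dec_step (hasCA_chain k (j+1) hca) hocc
    obtain ⟨i, hq3, hocc''⟩ := ih (j+1) W (q/3) hca hocc'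
    refine ⟨i, ?_, ?_⟩
    · have : q = 3 * (q/3) := by omega
      rw [this, hq3, pow_succ]; ring
    · rwa [show j+1+k = j+(k+1) by omega] at hocc''

lemma occ_push (j : ℕ) (W : List (Fin 3)) (q : ℕ)
    (h : OccursAt (tSeq (j+1)) W q) :
    OccursAt (tSeq j) (wordMap (elem j) W) (3*q) := by
  have hθ := elem_cases j
  have hlen3 := theta_len hθ
  have hlen : (wordMap (elem j) W).length = 3 * W.length := by
    rw [wordMap_length hlen3]
  have h' := (occursAt_iff _ _ _).1 h
  rw [occursAt_iff, hlen]
  intro t ht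
  obtain ⟨m, e, hme, he⟩ : ∃ m e, t = 3*m + e ∧ e < 3 := ⟨t/3, t%3, by omega, by omega⟩
  rw [hme, wordMap_getD hlen3 0 0 W m (by omega) e he,
    show 3*q + (3*m+e) = 3*(q+m)+e by omega,
    tSeq_img j (q+m) e he, h' m (by omega)]

lemma occ_push_chain (k : ℕ) : ∀ (j : ℕ) (W : List (Fin 3)) (q : ℕ),
    OccursAt (tSeq (j+k)) W q →
    OccursAt (tSeq j) (wordMap (chain elem j k) W) (3^k * q) := by
  induction k with
  | zero =>
    intro j W q h
    rw [wordMap_chain_zero]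
    simpa using h
  | succ k ih =>
    intro j W q h
    rw [wordMap_chain_succ]
    have h1 : OccursAt (tSeq (j+1+k)) W q := by
      rwa [show j+1+k = j+(k+1) by omega]
    have := occ_push j _ _ (ih (j+1) W q h1)
    rwa [show 3 * (3^k * q) = 3^(k+1) * q by rw [pow_succ]; ring] at this

lemma sep_ca : ∀ (d j : ℕ), (∀ l, l < d → elem (j+l) = sigma3) → elem (j+d) = tau3 →
    ∀ p p', tSeq j p = 2 → tSeq j (p+1) = 0 → tSeq j p' = 2 → tSeq j (p'+1) = 0 →
    p < p' → 3^(d+1) ≤ p' - p := by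
  intro d
  induction d with
  | zero =>
    intro j hσ hτ p p' h2 h0 h2' h0' hlt
    rw [Nat.add_zero] at hτ
    have H' : ∀ i e, e < 3 → tSeq j (3*i+e) = (tau3 (tSeq (j+1) i)).getD e 0 := by
      intro i e he; rw [← hτ]; exact tSeq_img j i e he
    obtain ⟨i, hp, -⟩ := ca_tau H' p h2 h0
    obtain ⟨i', hp', -⟩ := ca_tau H' p' h2' h0'
    have : (3:ℕ)^(0+1) = 3 := by norm_num
    omega
  | succ d ih =>
    intro j hσ hτ p p' h2 h0 h2' h0' hlt
    have hs : elem j = sigma3 := by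
      have := hσ 0 (by omega); rwa [Nat.add_zero] at this
    have H' : ∀ i e, e < 3 → tSeq j (3*i+e) = (sigma3 (tSeq (j+1) i)).getD e 0 := by
      intro i e he; rw [← hs]; exact tSeq_img j i e he
    obtain ⟨i, hp, hi2, hi0⟩ := ca_sig H' p h2 h0
    obtain ⟨i', hp', hi2', hi0'⟩ := ca_sig H' p' h2' h0'
    have hd : 3^(d+1) ≤ i' - i := by
      refine ih (j+1) (fun l hl => ?_) (by rwa [show j+1+d = j+(d+1) by omega]) i i' hi2 hi0 hi2' hi0' (by omega)
      have := hσ (l+1) (by omega)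
      rwa [show j+(l+1) = j+1+l by omega] at this
    have hpow : (3:ℕ)^(d+1+1) = 3^(d+1) * 3 := pow_succ 3 (d+1)
    omega

lemma down_ca : ∀ (d j : ℕ), (∀ l, l < d → elem (j+l) = sigma3) →
    ∀ p, tSeq (j+d) p = 2 → tSeq (j+d) (p+1) = 0 →
    ∃ P, p ≤ P ∧ tSeq j P = 2 ∧ tSeq j (P+1) = 0 := by
  intro d
  induction d with
  | zero =>
    intro j _ p h2 h0
    rw [Nat.add_zero] at h2 h0
    exact ⟨p, Nat.le_refl p, h2, h0⟩
  | succ d ih =>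
    intro j hσ p h2 h0
    rw [show j+(d+1) = (j+1)+d by omega] at h2 h0
    obtain ⟨P1, hle, h2', h0'⟩ := ih (j+1) (fun l hl => by
      have := hσ (l+1) (by omega)
      rwa [show j+(l+1) = j+1+l by omega] at this) p h2 h0
    have hs : elem j = sigma3 := by
      have := hσ 0 (by omega); rwa [Nat.add_zero] at this
    have H' : ∀ i e, e < 3 → tSeq j (3*i+e) = (sigma3 (tSeq (j+1) i)).getD e 0 := by
      intro i e he; rw [← hs]; exact tSeq_img j i e he
    obtain ⟨hA, hB⟩ := ca_prod_sig H' P1 h2' h0'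
    exact ⟨3*P1+2, by omega, hA, by rwa [show 3*P1+2+1 = 3*P1+3 by omega]⟩

end Decode

section NotLR

lemma occ20_iff (j p : ℕ) :
    OccursAt (tSeq j) [(2:Fin 3), 0] p ↔ (tSeq j p = 2 ∧ tSeq j (p+1) = 0) := by
  rw [occursAt_iff]
  constructor
  · intro h
    refine ⟨by simpa using h 0 (by norm_num), by simpa using h 1 (by norm_num)⟩
  · rintro ⟨h2, h0⟩ t ht
    have ht2 : t < 2 := by simpa using ht
    interval_cases t
    · simpa using h2
    · simpa using h0

lemma notLR {x : ℕ → Fin 3} (hx0 : ∀ m, x m = tSeq 0 m) : ¬ LinearlyRecurrent x := by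
  rintro ⟨K, hUR, hRet⟩
  have hxt : x = tSeq 0 := funext hx0
  set u : List (Fin 3) := wordMap (chain elem 0 (Tn K)) [2, 0] with hu
  have hulen : u.length = 3^(Tn K) * 2 := by
    rw [hu, wordMap_length (fun c => chain_elem_length 0 (Tn K) c)]
    rfl
  have hca : HasCA [(2:Fin 3), 0] := ⟨0, by norm_num, rfl, rfl⟩
  have hpos : (0:ℕ) < 3^(Tn K) := Nat.pow_pos (by norm_num)
  -- production of occurrences
  have hprod : ∀ p, ∃ q, p ≤ q ∧ OccursAt x u q := by
    intro p
    have hθ1 := elem_cases (Tn K + K + 2)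
    obtain ⟨i, hip, hib⟩ := nonb hθ1
      (fun i e he => tSeq_img (Tn K + K + 2) i e he) p
    have hτ : elem (Tn K + K + 1) = tau3 := elem_tau K
    have H' : ∀ i e, e < 3 →
        tSeq (Tn K + K + 1) (3*i+e) = (tau3 (tSeq (Tn K + K + 2) i)).getD e 0 := by
      intro i e he
      rw [← hτ]
      exact tSeq_img (Tn K + K + 1) i e he
    obtain ⟨hA, hB⟩ := ca_prod_tau H' i hib
    obtain ⟨P, hPle, hP2, hP0⟩ := down_ca (K+1) (Tn K)
      (fun l hl => elem_sig (by omega)) (3*i+2)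
      (by rwa [show Tn K + (K+1) = Tn K + K + 1 by omega])
      (by rwa [show Tn K + (K+1) = Tn K + K + 1 by omega, show 3*i+2+1 = 3*i+3 by omega])
    have hoccP : OccursAt (tSeq (Tn K)) [(2:Fin 3),0] P := (occ20_iff _ P).2 ⟨hP2, hP0⟩
    have hfin := occ_push_chain (Tn K) 0 [2,0] P (by rwa [Nat.zero_add])
    have hPq : P ≤ 3^(Tn K) * P := Nat.le_mul_of_pos_left P hpos
    refine ⟨3^(Tn K) * P, by omega, ?_⟩
    rw [hxt, hu]
    exact hfin
  -- separation of occurrences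
  have hsep : ∀ q q', OccursAt x u q → OccursAt x u q' → q < q' →
      3^(Tn K) * 3^(K+2) ≤ q' - q := by
    intro q q' h h' hlt
    rw [hxt, hu] at h h'
    obtain ⟨i, rfl, hocc⟩ := occ_decode (Tn K) 0 [2,0] q hca h
    obtain ⟨i', rfl, hocc'⟩ := occ_decode (Tn K) 0 [2,0] q' hca h'
    rw [Nat.zero_add] at hocc hocc'
    rw [occ20_iff] at hocc hocc'
    have hii' : i < i' := Nat.lt_of_mul_lt_mul_left hlt
    have hii : 3^(K+2) ≤ i' - i := by
      have := sep_ca (K+1) (Tn K) (fun l hl => elem_sig (by omega))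
        (by rw [show Tn K + (K+1) = Tn K + K + 1 by omega]; exact elem_tau K)
        i i' hocc.1 hocc.2 hocc'.1 hocc'.2 hii'
      rwa [show K+1+1 = K+2 by omega] at this
    have hmm := Nat.mul_le_mul_left (3^(Tn K)) (show i + 3^(K+2) ≤ i' by omega)
    rw [Nat.mul_add] at hmm
    omega
  -- consecutive occurrences
  obtain ⟨q0, -, hq0⟩ := hprod 0
  haveI hdec : DecidablePred (fun q => q0 < q ∧ OccursAt x u q) := by
    intro q
    unfold OccursAt
    infer_instance
  obtain ⟨q2, hq2a, hq2b⟩ := hprod (q0+1)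
  have hex : ∃ q, q0 < q ∧ OccursAt x u q := ⟨q2, by omega, hq2b⟩
  have hq1 := Nat.find_spec hex
  have hq1min : ∀ q, q < Nat.find hex → ¬(q0 < q ∧ OccursAt x u q) :=
    fun q hq => Nat.find_min hex hq
  set q1 := Nat.find hex with hq1def
  have hD : 3^(Tn K) * 3^(K+2) ≤ q1 - q0 := hsep q0 q1 hq0 hq1.2 hq1.1
  have hposD : 0 < 3^(Tn K) * 3^(K+2) := by positivity
  have h2pow : (2:ℕ) ≤ 3^(K+2) := by
    have h1 : 1 ≤ 3^K := Nat.one_le_pow _ _ (by norm_num)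
    have h2 : 3^(K+2) = 3^K * 9 := by ring
    omega
  have hul : u.length ≤ q1 - q0 := by
    have := Nat.mul_le_mul_left (3^(Tn K)) h2pow
    omega
  have hu0 : 0 < u.length := by omega
  set w : List (Fin 3) := (List.range (q1 - q0)).map (fun t => x (q0 + t)) with hw
  have hwlen : w.length = q1 - q0 := by simp [hw]
  have hwget : ∀ t, t < q1 - q0 → w.getD t 0 = x (q0+t) := by
    intro t ht
    rw [hw, List.getD_eq_getElem _ _ (by simpa using ht)]
    simp
  have hq1occ := (occursAt_iff _ _ _).1 hq1.2
  have hq0occ := (occursAt_iff _ _ _).1 hq0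
  -- w ++ u occurs at q0
  have hwu : OccursAt x (w ++ u) q0 := by
    rw [occursAt_iff]
    intro t ht
    rw [List.length_append, hwlen] at ht
    rcases Nat.lt_or_ge t (q1 - q0) with hc | hc
    · rw [List.getD_append _ _ _ _ (by rw [hwlen]; omega), hwget t hc]
    · rw [List.getD_append_right _ _ _ _ (by rw [hwlen]; omega), hwlen,
        ← hq1occ (t - (q1-q0)) (by omega)]
      congr 1
      omega
  -- u is a prefix of w ++ u
  have hwuget : ∀ s, s < w.length + u.length → (w ++ u).getD s 0 = x (q0 + s) := by
    intro s hs
    exact ((occursAt_iff _ _ _).1 hwu s (by rw [List.length_append]; omega)).symm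
  have hpref : u <+: (w ++ u) := by
    rw [List.prefix_iff_eq_take]
    apply List.ext_get
    · rw [List.length_take, List.length_append]
      omega
    · intro t h1 h2
      have ht : t < u.length := h1
      rw [List.get_eq_getElem, List.get_eq_getElem, List.getElem_take]
      rw [show (w ++ u)[t]'(by rw [List.length_append]; omega)
          = (w ++ u).getD t 0 from (List.getD_eq_getElem _ 0 (by rw [List.length_append]; omega)).symm]
      rw [hwuget t (by omega), hq0occ t ht, List.getD_eq_getElem _ _ ht]
  -- exactly two occurrences of u in w ++ u
  have hcount : OccCountEq u (w ++ u) 2 := by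
    unfold OccCountEq
    have hset : {i : ℕ | u <+: (w++u).drop i} = {0, w.length} := by
      ext i
      simp only [Set.mem_setOf_eq, Set.mem_insert_iff, Set.mem_singleton_iff]
      constructor
      · intro hpre
        have hlen_i : i ≤ w.length := by
          have h1 := hpre.length_le
          rw [List.length_drop, List.length_append] at h1
          omega
        have hocc_i : OccursAt x u (q0 + i) := by
          rw [occursAt_iff]
          intro t ht
          have h3 : ((w++u).drop i).getD t 0 = (w++u).getD (i+t) 0 := by
            rw [List.getD_eq_getElem _ _ (by rw [List.length_drop, List.length_append]; omega),
              List.getD_eq_getElem _ _ (by rw [List.length_append]; omega),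
              List.getElem_drop]
          rw [show q0+i+t = q0+(i+t) by omega, ← hwuget (i+t) (by omega), ← h3,
            getD_of_prefix hpre ht]
        rcases Nat.eq_zero_or_pos i with rfl | hipos
        · left; rfl
        · right
          by_contra hne
          have hlt : q0 + i < q1 := by omega
          exact (hq1min (q0+i) hlt) ⟨by omega, hocc_i⟩
      · rintro (rfl | rfl)
        · rw [List.drop_zero]; exact hpref
        · rw [List.drop_left]
    rw [hset]
    exact Set.ncard_pair (by omega)
  -- contradiction with the return word length bound
  have hbound := hRet u w ⟨⟨q0, hwu⟩, hpref, hcount⟩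
  rw [hwlen, hulen] at hbound
  have hK : 2*K < 3^(K+2) := by
    have h1 : K < 3^K := Nat.lt_pow_self (n := K) (by norm_num)
    have h2 : 3^(K+2) = 9 * 3^K := by ring
    omega
  have hmul : 3^(Tn K) * (2*K) < 3^(Tn K) * 3^(K+2) :=
    mul_lt_mul_of_pos_left hK hpos
  have heq : K * (3^(Tn K) * 2) = 3^(Tn K) * (2*K) := by ring
  omega

end NotLR

/-- The counterexample `x = lim στσ²τ⋯σⁿτ(aaa⋯)` has linear complexity,
`p_x(n) ≤ 27 n`, although it is not linearly recurrent. -/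
theorem counterexample_linear_complexity (x : ℕ → Fin 3)
    (hx : ConvergesTo (fun n => rho n 0) 0 x) :
    (∃ C : ℕ, ∀ n ≥ 1, complexity x n ≤ C * n) ∧
    (∀ n ≥ 1, complexity x n ≤ 27 * n) ∧
    ¬ LinearlyRecurrent x := by
  have hx0 : ∀ m, x m = tSeq 0 m := x_eq_tSeq hx
  exact ⟨⟨27, fun n hn => complexity_le hx0 hn⟩,
    fun n hn => complexity_le hx0 hn, notLR hx0⟩

end DurandLR
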